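/- Fix N, M ∈ ℕ and let 𝓡 be a set of rules such that every rule r = ⟨L ← K → R⟩ ∈ 𝓡 satisfies (a) deg_R(v) ≤ N for all v ∈ V_R ∖ V_K and deg_R(v) ≤ deg_L(v) for all v ∈ V_K, and (b) |p_R⁻¹({1})| ≤ |p_L⁻¹({1})|. Then for all TLRGs G, H with G ⇒_𝓡 H: if every node of G has degree at most N, then every node of H has degree at most N; and if G has at most M root nodes, then H has at most M root nodes. -/

import Mathlib

/-! # Rooted graph transformation with relabelling -/

/-- A graph over a label alphabet `(LV, LE)`: finite vertex and edge sets, total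
source/target functions, a partial node-labelling function `l`, a total
edge-labelling function `m`, and a partial rootedness function `p`
(`some true` = root node, `some false` = non-root, `none` = undefined). -/
structure GTGraph (LV LE : Type) : Type 1 where
  V : Type
  E : Type
  finV : Finite V
  finE : Finite E
  s : E → V
  t : E → V
  l : V → Option LV
  m : E → LE
  p : V → Option Bool

namespace GTGraph

variable {LV LE : Type}

def IsTotallyLabelled (G : GTGraph LV LE) : Prop := ∀ v, (G.l v).isSome
def IsTotallyRooted (G : GTGraph LV LE) : Prop := ∀ v, (G.p v).isSome
/-- totally labelled, totally rooted graph -/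
def IsTLRG (G : GTGraph LV LE) : Prop := G.IsTotallyLabelled ∧ G.IsTotallyRooted

/-- The number of root nodes `|p⁻¹({1})|`. -/
noncomputable def rootCount (G : GTGraph LV LE) : ℕ := Nat.card {v : G.V // G.p v = some true}

/-- The degree of a node. -/
noncomputable def degree (G : GTGraph LV LE) (v : G.V) : ℕ :=
  Nat.card {e : G.E // G.s e = v} + Nat.card {e : G.E // G.t e = v}

end GTGraph

/-- GTGraph morphisms preserve sources, targets, edge labels, and node labels and
rootedness wherever these are defined. -/
structure Morphism {LV LE : Type} (G H : GTGraph LV LE) : Type where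
  fV : G.V → H.V
  fE : G.E → H.E
  src : ∀ e, fV (G.s e) = H.s (fE e)
  tgt : ∀ e, fV (G.t e) = H.t (fE e)
  edgeLabel : ∀ e, G.m e = H.m (fE e)
  nodeLabel : ∀ v x, G.l v = some x → H.l (fV v) = some x
  rootedness : ∀ v b, G.p v = some b → H.p (fV v) = some b

namespace Morphism

variable {LV LE : Type} {G H K : GTGraph LV LE}

def Injective (g : Morphism G H) : Prop := Function.Injective g.fV ∧ Function.Injective g.fE

/-- identity morphism -/
def ident (G : GTGraph LV LE) : Morphism G G where
  fV := id
  fE := id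
  src := fun _ => rfl
  tgt := fun _ => rfl
  edgeLabel := fun _ => rfl
  nodeLabel := fun _ _ h => h
  rootedness := fun _ _ h => h

/-- composition of morphisms -/
def comp (g : Morphism G H) (h : Morphism H K) : Morphism G K where
  fV := h.fV ∘ g.fV
  fE := h.fE ∘ g.fE
  src := fun e => by simp [Function.comp, g.src e, h.src (g.fE e)]
  tgt := fun e => by simp [Function.comp, g.tgt e, h.tgt (g.fE e)]
  edgeLabel := fun e => by simp [Function.comp, ← h.edgeLabel (g.fE e), g.edgeLabel e]
  nodeLabel := fun v x hx => h.nodeLabel _ _ (g.nodeLabel v x hx)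
  rootedness := fun v b hb => h.rootedness _ _ (g.rootedness v b hb)

end Morphism

/-- An isomorphism of graphs: a morphism with a two-sided inverse morphism. -/
structure Iso {LV LE : Type} (G H : GTGraph LV LE) : Type where
  toMor : Morphism G H
  invMor : Morphism H G
  leftV : ∀ v, invMor.fV (toMor.fV v) = v
  leftE : ∀ e, invMor.fE (toMor.fE e) = e
  rightV : ∀ v, toMor.fV (invMor.fV v) = v
  rightE : ∀ e, toMor.fE (invMor.fE e) = e

/-- A rule `⟨L ← K → R⟩`: graphs `L`, `K`, `R` together with inclusion
(injective) morphisms `K ↪ L` and `K ↪ R`.  (In the rooted relabelling setting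
`L` and `R` are additionally required to be TLRGs; this requirement is stated
as a hypothesis where needed.) -/
structure Rule (LV LE : Type) : Type 1 where
  L : GTGraph LV LE
  K : GTGraph LV LE
  R : GTGraph LV LE
  incL : Morphism K L
  incR : Morphism K R
  injL : incL.Injective
  injR : incR.Injective

namespace Rule

variable {LV LE : Type} (r : Rule LV LE) (G : GTGraph LV LE)

/-- The inverse rule `r⁻¹ = ⟨R ← K → L⟩`. -/
def inv (r : Rule LV LE) : Rule LV LE where
  L := r.R
  K := r.K
  R := r.L
  incL := r.incR
  incR := r.incL
  injL := r.injR
  injR := r.injL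

/-- The dangling condition: no edge of `G ∖ g(L)` is incident to a node of `g(L ∖ K)`. -/
def Dangling (g : Morphism r.L G) : Prop :=
  ∀ e : G.E, (∀ e' : r.L.E, g.fE e' ≠ e) →
    ∀ v : r.L.V, (∀ k : r.K.V, r.incL.fV k ≠ v) →
      G.s e ≠ g.fV v ∧ G.t e ≠ g.fV v

/-- The match `g` is applicable: it is injective and satisfies the dangling condition. -/
def Applicable (g : Morphism r.L G) : Prop := g.Injective ∧ r.Dangling G g

/-- the nodes `g(L ∖ K)` deleted by applying `r` via `g` -/
def DelV (g : Morphism r.L G) : Set G.V :=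
  {x | ∃ v : r.L.V, (∀ k : r.K.V, r.incL.fV k ≠ v) ∧ g.fV v = x}

/-- the edges `g(L ∖ K)` deleted by applying `r` via `g` -/
def DelE (g : Morphism r.L G) : Set G.E :=
  {x | ∃ e : r.L.E, (∀ k : r.K.E, r.incL.fE k ≠ e) ∧ g.fE e = x}

theorem kept_incL {g : Morphism r.L G} (hinj : g.Injective) (k : r.K.V) :
    g.fV (r.incL.fV k) ∉ r.DelV G g := by
  rintro ⟨v, hv, heq⟩
  exact hv k (hinj.1 heq).symm

theorem kept_src {g : Morphism r.L G} (h : r.Applicable G g) {e : G.E}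
    (he : e ∉ r.DelE G g) : G.s e ∉ r.DelV G g := by
  rintro ⟨v, hv, heq⟩
  by_cases hc : ∃ e', g.fE e' = e
  · obtain ⟨e', rfl⟩ := hc
    by_cases hk : ∃ k, r.incL.fE k = e'
    · obtain ⟨k, rfl⟩ := hk
      have h1 : g.fV (r.L.s (r.incL.fE k)) = G.s (g.fE (r.incL.fE k)) := g.src _
      have h2 : r.incL.fV (r.K.s k) = r.L.s (r.incL.fE k) := r.incL.src k
      have h3 : g.fV v = g.fV (r.incL.fV (r.K.s k)) := by rw [heq, h2, h1]
      exact hv _ (h.1.1 h3).symm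
    · exact he ⟨e', fun k hk' => hk ⟨k, hk'⟩, rfl⟩
  · exact (h.2 e (fun e' he' => hc ⟨e', he'⟩) v hv).1 heq.symm

theorem kept_tgt {g : Morphism r.L G} (h : r.Applicable G g) {e : G.E}
    (he : e ∉ r.DelE G g) : G.t e ∉ r.DelV G g := by
  rintro ⟨v, hv, heq⟩
  by_cases hc : ∃ e', g.fE e' = e
  · obtain ⟨e', rfl⟩ := hc
    by_cases hk : ∃ k, r.incL.fE k = e'
    · obtain ⟨k, rfl⟩ := hk
      have h1 : g.fV (r.L.t (r.incL.fE k)) = G.t (g.fE (r.incL.fE k)) := g.tgt _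
      have h2 : r.incL.fV (r.K.t k) = r.L.t (r.incL.fE k) := r.incL.tgt k
      have h3 : g.fV v = g.fV (r.incL.fV (r.K.t k)) := by rw [heq, h2, h1]
      exact hv _ (h.1.1 h3).symm
    · exact he ⟨e', fun k hk' => hk ⟨k, hk'⟩, rfl⟩
  · exact (h.2 e (fun e' he' => hc ⟨e', he'⟩) v hv).2 heq.symm

attribute [local instance] Classical.propDecidable

/-- The result graph of applying `r` to `G` via an applicable match `g`:
delete `g(L ∖ K)` (undefining labels/rootedness of images of interface nodes
where they are undefined in `K`), then add `R ∖ K` disjointly, relabelling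
(and re-rooting) the images of interface nodes according to `R`. -/
noncomputable def result (g : Morphism r.L G) (h : r.Applicable G g) : GTGraph LV LE where
  V := {x : G.V // x ∉ r.DelV G g} ⊕ {v : r.R.V // ∀ k, r.incR.fV k ≠ v}
  E := {x : G.E // x ∉ r.DelE G g} ⊕ {e : r.R.E // ∀ k, r.incR.fE k ≠ e}
  finV := by
    haveI := G.finV; haveI := r.R.finV
    infer_instance
  finE := by
    haveI := G.finE; haveI := r.R.finE
    infer_instance
  s := fun e =>
    match e with
    | Sum.inl x => Sum.inl ⟨G.s x.1, r.kept_src G h x.2⟩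
    | Sum.inr x =>
        if hk : ∃ k, r.incR.fV k = r.R.s x.1 then
          Sum.inl ⟨g.fV (r.incL.fV hk.choose), r.kept_incL G h.1 _⟩
        else Sum.inr ⟨r.R.s x.1, fun k hk' => hk ⟨k, hk'⟩⟩
  t := fun e =>
    match e with
    | Sum.inl x => Sum.inl ⟨G.t x.1, r.kept_tgt G h x.2⟩
    | Sum.inr x =>
        if hk : ∃ k, r.incR.fV k = r.R.t x.1 then
          Sum.inl ⟨g.fV (r.incL.fV hk.choose), r.kept_incL G h.1 _⟩
        else Sum.inr ⟨r.R.t x.1, fun k hk' => hk ⟨k, hk'⟩⟩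
  l := fun v =>
    match v with
    | Sum.inl x =>
        if hk : ∃ k : r.K.V, r.K.l k = none ∧ g.fV (r.incL.fV k) = x.1 then
          r.R.l (r.incR.fV hk.choose)
        else G.l x.1
    | Sum.inr v => r.R.l v.1
  m := fun e =>
    match e with
    | Sum.inl x => G.m x.1
    | Sum.inr x => r.R.m x.1
  p := fun v =>
    match v with
    | Sum.inl x =>
        if hk : ∃ k : r.K.V, r.K.p k = none ∧ g.fV (r.incL.fV k) = x.1 then
          r.R.p (r.incR.fV hk.choose)
        else G.p x.1
    | Sum.inr v => r.R.p v.1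

/-- Direct derivation `G ⇒_r M`: there is an applicable match `g` such that `M`
is isomorphic to the result of applying `r` to `G` via `g`. -/
def Deriv (r : Rule LV LE) (G M : GTGraph LV LE) : Prop :=
  ∃ (g : Morphism r.L G) (h : r.Applicable G g), Nonempty (Iso (r.result G g h) M)

end Rule

/-- `G ⇒_𝓡 H` for a set of rules. -/
def GTStep {LV LE : Type} (Rs : Set (Rule LV LE)) (G H : GTGraph LV LE) : Prop :=
  ∃ r ∈ Rs, r.Deriv G H

/-- `G ⇒*_𝓡 H`: the reflexive-transitive closure of `⇒_𝓡`, up to isomorphism. -/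
def GTDerivStar {LV LE : Type} (Rs : Set (Rule LV LE)) (G H : GTGraph LV LE) : Prop :=
  Relation.ReflTransGen (GTStep Rs) G H ∨ Nonempty (Iso G H)

/-! ### Auxiliary counting lemmas -/

section AuxCount

lemma card_bij' {α β : Type} (f : α → β) (hf : Function.Bijective f) :
    Nat.card α = Nat.card β := Nat.card_congr (Equiv.ofBijective f hf)

lemma card_split' {α : Type} [Finite α] (P Q : α → Prop) :
    Nat.card {a // P a} = Nat.card {a // P a ∧ Q a} + Nat.card {a // P a ∧ ¬ Q a} := by
  classical
  rw [← Nat.card_sum]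
  exact Nat.card_congr ((Equiv.sumCompl (fun x : {a // P a} => Q x.1)).symm.trans
    (Equiv.sumCongr (Equiv.subtypeSubtypeEquivSubtypeInter P Q)
      (Equiv.subtypeSubtypeEquivSubtypeInter P (fun a => ¬ Q a))))

lemma card_sum_split' {α β : Type} [Finite α] [Finite β] (P : α ⊕ β → Prop) :
    Nat.card {x : α ⊕ β // P x} =
      Nat.card {a // P (Sum.inl a)} + Nat.card {b // P (Sum.inr b)} := by
  rw [← Nat.card_sum]
  exact Nat.card_congr ⟨fun x => match x with
      | ⟨Sum.inl a, hp⟩ => Sum.inl ⟨a, hp⟩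
      | ⟨Sum.inr b, hp⟩ => Sum.inr ⟨b, hp⟩,
    fun x => match x with
      | Sum.inl ⟨a, hp⟩ => ⟨Sum.inl a, hp⟩
      | Sum.inr ⟨b, hp⟩ => ⟨Sum.inr b, hp⟩,
    by rintro ⟨a | b, hp⟩ <;> rfl,
    by rintro (⟨a, hp⟩ | ⟨b, hp⟩) <;> rfl⟩

end AuxCount

namespace Iso

variable {LV LE : Type} {G H : GTGraph LV LE}

lemma degree_eq' (i : Iso G H) (v : H.V) :
    H.degree v = G.degree (i.invMor.fV v) := by
  haveI := G.finE; haveI := H.finE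
  unfold GTGraph.degree
  congr 1
  · refine card_bij' (fun e => ⟨i.invMor.fE e.1, ?_⟩) ⟨?_, ?_⟩
    · rw [← i.invMor.src, e.2]
    · rintro e1 e2 he
      have := congrArg i.toMor.fE (Subtype.mk.injEq .. ▸ he)
      exact Subtype.ext (by rwa [i.rightE, i.rightE] at this)
    · rintro ⟨e, he⟩
      refine ⟨⟨i.toMor.fE e, ?_⟩, Subtype.ext (i.leftE e)⟩
      rw [← i.toMor.src, he, i.rightV]
  · refine card_bij' (fun e => ⟨i.invMor.fE e.1, ?_⟩) ⟨?_, ?_⟩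
    · rw [← i.invMor.tgt, e.2]
    · rintro e1 e2 he
      have := congrArg i.toMor.fE (Subtype.mk.injEq .. ▸ he)
      exact Subtype.ext (by rwa [i.rightE, i.rightE] at this)
    · rintro ⟨e, he⟩
      refine ⟨⟨i.toMor.fE e, ?_⟩, Subtype.ext (i.leftE e)⟩
      rw [← i.toMor.tgt, he, i.rightV]

lemma rootCount_eq' (i : Iso G H) : H.rootCount = G.rootCount := by
  haveI := G.finV; haveI := H.finV
  unfold GTGraph.rootCount
  refine card_bij' (fun v => ⟨i.invMor.fV v.1, i.invMor.rootedness _ _ v.2⟩) ⟨?_, ?_⟩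
  · rintro v1 v2 hv
    have := congrArg i.toMor.fV (Subtype.mk.injEq .. ▸ hv)
    exact Subtype.ext (by rwa [i.rightV, i.rightV] at this)
  · rintro ⟨v, hv⟩
    exact ⟨⟨i.toMor.fV v, i.toMor.rootedness _ _ hv⟩, Subtype.ext (i.leftV v)⟩

end Iso

namespace Rule

variable {LV LE : Type} (r : Rule LV LE) (G : GTGraph LV LE) (g : Morphism r.L G)
  (h : r.Applicable G g)

attribute [local instance] Classical.propDecidable

lemma result_s_inl (x : {x : G.E // x ∉ r.DelE G g}) :
    (r.result G g h).s (Sum.inl x) = Sum.inl ⟨G.s x.1, r.kept_src G h x.2⟩ := rfl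

lemma result_t_inl (x : {x : G.E // x ∉ r.DelE G g}) :
    (r.result G g h).t (Sum.inl x) = Sum.inl ⟨G.t x.1, r.kept_tgt G h x.2⟩ := rfl

lemma result_s_inr (x : {e : r.R.E // ∀ k, r.incR.fE k ≠ e}) :
    (r.result G g h).s (Sum.inr x) =
      if hk : ∃ k, r.incR.fV k = r.R.s x.1 then
        Sum.inl ⟨g.fV (r.incL.fV hk.choose), r.kept_incL G h.1 _⟩
      else Sum.inr ⟨r.R.s x.1, fun k hk' => hk ⟨k, hk'⟩⟩ := rfl

lemma result_t_inr (x : {e : r.R.E // ∀ k, r.incR.fE k ≠ e}) :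
    (r.result G g h).t (Sum.inr x) =
      if hk : ∃ k, r.incR.fV k = r.R.t x.1 then
        Sum.inl ⟨g.fV (r.incL.fV hk.choose), r.kept_incL G h.1 _⟩
      else Sum.inr ⟨r.R.t x.1, fun k hk' => hk ⟨k, hk'⟩⟩ := rfl

lemma inr_s_eq_interface (k : r.K.V) (x : {e : r.R.E // ∀ k, r.incR.fE k ≠ e})
    (hx : g.fV (r.incL.fV k) ∉ r.DelV G g) :
    (r.result G g h).s (Sum.inr x) = Sum.inl ⟨g.fV (r.incL.fV k), hx⟩ ↔
      r.R.s x.1 = r.incR.fV k := by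
  rw [result_s_inr]
  by_cases hk : ∃ k', r.incR.fV k' = r.R.s x.1
  · rw [dif_pos hk]
    constructor
    · intro he
      have h1 : g.fV (r.incL.fV hk.choose) = g.fV (r.incL.fV k) :=
        congrArg Subtype.val (Sum.inl.inj he)
      have h2 : hk.choose = k := r.injL.1 (h.1.1 h1)
      rw [← hk.choose_spec, h2]
    · intro he
      have h2 : hk.choose = k := by
        apply r.injR.1
        rw [hk.choose_spec, he]
      exact congrArg Sum.inl (Subtype.ext (by rw [h2]))
  · rw [dif_neg hk]
    simp only [reduceCtorEq, false_iff]
    intro he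
    exact hk ⟨k, he.symm⟩

lemma inr_t_eq_interface (k : r.K.V) (x : {e : r.R.E // ∀ k, r.incR.fE k ≠ e})
    (hx : g.fV (r.incL.fV k) ∉ r.DelV G g) :
    (r.result G g h).t (Sum.inr x) = Sum.inl ⟨g.fV (r.incL.fV k), hx⟩ ↔
      r.R.t x.1 = r.incR.fV k := by
  rw [result_t_inr]
  by_cases hk : ∃ k', r.incR.fV k' = r.R.t x.1
  · rw [dif_pos hk]
    constructor
    · intro he
      have h1 : g.fV (r.incL.fV hk.choose) = g.fV (r.incL.fV k) :=
        congrArg Subtype.val (Sum.inl.inj he)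
      have h2 : hk.choose = k := r.injL.1 (h.1.1 h1)
      rw [← hk.choose_spec, h2]
    · intro he
      have h2 : hk.choose = k := by
        apply r.injR.1
        rw [hk.choose_spec, he]
      exact congrArg Sum.inl (Subtype.ext (by rw [h2]))
  · rw [dif_neg hk]
    simp only [reduceCtorEq, false_iff]
    intro he
    exact hk ⟨k, he.symm⟩

lemma src_count_interface (k : r.K.V) (hx : g.fV (r.incL.fV k) ∉ r.DelV G g) :
    Nat.card {e : (r.result G g h).E //
        (r.result G g h).s e = Sum.inl ⟨g.fV (r.incL.fV k), hx⟩}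
      + Nat.card {e : r.L.E // r.L.s e = r.incL.fV k}
    = Nat.card {e : G.E // G.s e = g.fV (r.incL.fV k)}
      + Nat.card {e : r.R.E // r.R.s e = r.incR.fV k} := by
  haveI := G.finE; haveI := r.L.finE; haveI := r.R.finE; haveI := r.K.finE
  have h1 : Nat.card {e : (r.result G g h).E //
        (r.result G g h).s e = Sum.inl ⟨g.fV (r.incL.fV k), hx⟩}
      = Nat.card {e : G.E // G.s e = g.fV (r.incL.fV k) ∧ e ∉ r.DelE G g}
        + Nat.card {e : r.R.E // r.R.s e = r.incR.fV k ∧ ∀ k', r.incR.fE k' ≠ e} := by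
    refine (card_sum_split' (α := {x : G.E // x ∉ r.DelE G g})
        (β := {e : r.R.E // ∀ k, r.incR.fE k ≠ e})
        (fun e => (r.result G g h).s e = Sum.inl ⟨g.fV (r.incL.fV k), hx⟩)).trans ?_
    congr 1
    · refine Nat.card_congr (((Equiv.subtypeEquivRight fun a => ?_).trans
        (Equiv.subtypeSubtypeEquivSubtypeInter _ _)).trans
        (Equiv.subtypeEquivRight fun e => and_comm))
      rw [result_s_inl]
      exact ⟨fun he => congrArg Subtype.val (Sum.inl.inj he),
        fun he => congrArg Sum.inl (Subtype.ext he)⟩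
    · refine Nat.card_congr (((Equiv.subtypeEquivRight fun b => ?_).trans
        (Equiv.subtypeSubtypeEquivSubtypeInter _ _)).trans
        (Equiv.subtypeEquivRight fun e => and_comm))
      exact inr_s_eq_interface r G g h k b hx
  have h2 : Nat.card {e : G.E // G.s e = g.fV (r.incL.fV k)}
      = Nat.card {e : G.E // G.s e = g.fV (r.incL.fV k) ∧ e ∈ r.DelE G g}
        + Nat.card {e : G.E // G.s e = g.fV (r.incL.fV k) ∧ e ∉ r.DelE G g} :=
    card_split' _ _
  have h3 : Nat.card {e : G.E // G.s e = g.fV (r.incL.fV k) ∧ e ∈ r.DelE G g}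
      = Nat.card {e : r.L.E // r.L.s e = r.incL.fV k ∧ ∀ k', r.incL.fE k' ≠ e} := by
    symm
    refine card_bij' (fun e => ⟨g.fE e.1, ?_, e.1, e.2.2, rfl⟩) ⟨?_, ?_⟩
    · rw [← g.src, e.2.1]
    · rintro e1 e2 he
      exact Subtype.ext (h.1.2 (Subtype.mk.injEq .. ▸ he))
    · rintro ⟨e, hs, e', hne, rfl⟩
      refine ⟨⟨e', ?_, hne⟩, rfl⟩
      apply h.1.1
      rw [g.src, hs]
  have h4 : Nat.card {e : r.L.E // r.L.s e = r.incL.fV k}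
      = Nat.card {e : r.L.E // r.L.s e = r.incL.fV k ∧ ∃ k', r.incL.fE k' = e}
        + Nat.card {e : r.L.E // r.L.s e = r.incL.fV k ∧ ¬ ∃ k', r.incL.fE k' = e} :=
    card_split' _ _
  have h4' : Nat.card {e : r.L.E // r.L.s e = r.incL.fV k ∧ ¬ ∃ k', r.incL.fE k' = e}
      = Nat.card {e : r.L.E // r.L.s e = r.incL.fV k ∧ ∀ k', r.incL.fE k' ≠ e} :=
    Nat.card_congr (Equiv.subtypeEquivRight fun e => by
      rw [and_congr_right_iff]; intro _; push_neg; rfl)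
  have h5 : Nat.card {e : r.L.E // r.L.s e = r.incL.fV k ∧ ∃ k', r.incL.fE k' = e}
      = Nat.card {e : r.K.E // r.K.s e = k} := by
    symm
    refine card_bij' (fun e => ⟨r.incL.fE e.1, ?_, e.1, rfl⟩) ⟨?_, ?_⟩
    · rw [← r.incL.src, e.2]
    · rintro e1 e2 he
      exact Subtype.ext (r.injL.2 (Subtype.mk.injEq .. ▸ he))
    · rintro ⟨e, hs, e', rfl⟩
      refine ⟨⟨e', ?_⟩, rfl⟩
      apply r.injL.1
      rw [r.incL.src, hs]
  have h6 : Nat.card {e : r.R.E // r.R.s e = r.incR.fV k}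
      = Nat.card {e : r.R.E // r.R.s e = r.incR.fV k ∧ ∃ k', r.incR.fE k' = e}
        + Nat.card {e : r.R.E // r.R.s e = r.incR.fV k ∧ ¬ ∃ k', r.incR.fE k' = e} :=
    card_split' _ _
  have h6' : Nat.card {e : r.R.E // r.R.s e = r.incR.fV k ∧ ¬ ∃ k', r.incR.fE k' = e}
      = Nat.card {e : r.R.E // r.R.s e = r.incR.fV k ∧ ∀ k', r.incR.fE k' ≠ e} :=
    Nat.card_congr (Equiv.subtypeEquivRight fun e => by
      rw [and_congr_right_iff]; intro _; push_neg; rfl)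
  have h7 : Nat.card {e : r.R.E // r.R.s e = r.incR.fV k ∧ ∃ k', r.incR.fE k' = e}
      = Nat.card {e : r.K.E // r.K.s e = k} := by
    symm
    refine card_bij' (fun e => ⟨r.incR.fE e.1, ?_, e.1, rfl⟩) ⟨?_, ?_⟩
    · rw [← r.incR.src, e.2]
    · rintro e1 e2 he
      exact Subtype.ext (r.injR.2 (Subtype.mk.injEq .. ▸ he))
    · rintro ⟨e, hs, e', rfl⟩
      refine ⟨⟨e', ?_⟩, rfl⟩
      apply r.injR.1
      rw [r.incR.src, hs]
  omega

lemma tgt_count_interface (k : r.K.V) (hx : g.fV (r.incL.fV k) ∉ r.DelV G g) :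
    Nat.card {e : (r.result G g h).E //
        (r.result G g h).t e = Sum.inl ⟨g.fV (r.incL.fV k), hx⟩}
      + Nat.card {e : r.L.E // r.L.t e = r.incL.fV k}
    = Nat.card {e : G.E // G.t e = g.fV (r.incL.fV k)}
      + Nat.card {e : r.R.E // r.R.t e = r.incR.fV k} := by
  haveI := G.finE; haveI := r.L.finE; haveI := r.R.finE; haveI := r.K.finE
  have h1 : Nat.card {e : (r.result G g h).E //
        (r.result G g h).t e = Sum.inl ⟨g.fV (r.incL.fV k), hx⟩}
      = Nat.card {e : G.E // G.t e = g.fV (r.incL.fV k) ∧ e ∉ r.DelE G g}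
        + Nat.card {e : r.R.E // r.R.t e = r.incR.fV k ∧ ∀ k', r.incR.fE k' ≠ e} := by
    refine (card_sum_split' (α := {x : G.E // x ∉ r.DelE G g})
        (β := {e : r.R.E // ∀ k, r.incR.fE k ≠ e})
        (fun e => (r.result G g h).t e = Sum.inl ⟨g.fV (r.incL.fV k), hx⟩)).trans ?_
    congr 1
    · refine Nat.card_congr (((Equiv.subtypeEquivRight fun a => ?_).trans
        (Equiv.subtypeSubtypeEquivSubtypeInter _ _)).trans
        (Equiv.subtypeEquivRight fun e => and_comm))
      rw [result_t_inl]
      exact ⟨fun he => congrArg Subtype.val (Sum.inl.inj he),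
        fun he => congrArg Sum.inl (Subtype.ext he)⟩
    · refine Nat.card_congr (((Equiv.subtypeEquivRight fun b => ?_).trans
        (Equiv.subtypeSubtypeEquivSubtypeInter _ _)).trans
        (Equiv.subtypeEquivRight fun e => and_comm))
      exact inr_t_eq_interface r G g h k b hx
  have h2 : Nat.card {e : G.E // G.t e = g.fV (r.incL.fV k)}
      = Nat.card {e : G.E // G.t e = g.fV (r.incL.fV k) ∧ e ∈ r.DelE G g}
        + Nat.card {e : G.E // G.t e = g.fV (r.incL.fV k) ∧ e ∉ r.DelE G g} :=
    card_split' _ _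
  have h3 : Nat.card {e : G.E // G.t e = g.fV (r.incL.fV k) ∧ e ∈ r.DelE G g}
      = Nat.card {e : r.L.E // r.L.t e = r.incL.fV k ∧ ∀ k', r.incL.fE k' ≠ e} := by
    symm
    refine card_bij' (fun e => ⟨g.fE e.1, ?_, e.1, e.2.2, rfl⟩) ⟨?_, ?_⟩
    · rw [← g.tgt, e.2.1]
    · rintro e1 e2 he
      exact Subtype.ext (h.1.2 (Subtype.mk.injEq .. ▸ he))
    · rintro ⟨e, hs, e', hne, rfl⟩
      refine ⟨⟨e', ?_, hne⟩, rfl⟩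
      apply h.1.1
      rw [g.tgt, hs]
  have h4 : Nat.card {e : r.L.E // r.L.t e = r.incL.fV k}
      = Nat.card {e : r.L.E // r.L.t e = r.incL.fV k ∧ ∃ k', r.incL.fE k' = e}
        + Nat.card {e : r.L.E // r.L.t e = r.incL.fV k ∧ ¬ ∃ k', r.incL.fE k' = e} :=
    card_split' _ _
  have h4' : Nat.card {e : r.L.E // r.L.t e = r.incL.fV k ∧ ¬ ∃ k', r.incL.fE k' = e}
      = Nat.card {e : r.L.E // r.L.t e = r.incL.fV k ∧ ∀ k', r.incL.fE k' ≠ e} :=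
    Nat.card_congr (Equiv.subtypeEquivRight fun e => by
      rw [and_congr_right_iff]; intro _; push_neg; rfl)
  have h5 : Nat.card {e : r.L.E // r.L.t e = r.incL.fV k ∧ ∃ k', r.incL.fE k' = e}
      = Nat.card {e : r.K.E // r.K.t e = k} := by
    symm
    refine card_bij' (fun e => ⟨r.incL.fE e.1, ?_, e.1, rfl⟩) ⟨?_, ?_⟩
    · rw [← r.incL.tgt, e.2]
    · rintro e1 e2 he
      exact Subtype.ext (r.injL.2 (Subtype.mk.injEq .. ▸ he))
    · rintro ⟨e, hs, e', rfl⟩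
      refine ⟨⟨e', ?_⟩, rfl⟩
      apply r.injL.1
      rw [r.incL.tgt, hs]
  have h6 : Nat.card {e : r.R.E // r.R.t e = r.incR.fV k}
      = Nat.card {e : r.R.E // r.R.t e = r.incR.fV k ∧ ∃ k', r.incR.fE k' = e}
        + Nat.card {e : r.R.E // r.R.t e = r.incR.fV k ∧ ¬ ∃ k', r.incR.fE k' = e} :=
    card_split' _ _
  have h6' : Nat.card {e : r.R.E // r.R.t e = r.incR.fV k ∧ ¬ ∃ k', r.incR.fE k' = e}
      = Nat.card {e : r.R.E // r.R.t e = r.incR.fV k ∧ ∀ k', r.incR.fE k' ≠ e} :=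
    Nat.card_congr (Equiv.subtypeEquivRight fun e => by
      rw [and_congr_right_iff]; intro _; push_neg; rfl)
  have h7 : Nat.card {e : r.R.E // r.R.t e = r.incR.fV k ∧ ∃ k', r.incR.fE k' = e}
      = Nat.card {e : r.K.E // r.K.t e = k} := by
    symm
    refine card_bij' (fun e => ⟨r.incR.fE e.1, ?_, e.1, rfl⟩) ⟨?_, ?_⟩
    · rw [← r.incR.tgt, e.2]
    · rintro e1 e2 he
      exact Subtype.ext (r.injR.2 (Subtype.mk.injEq .. ▸ he))
    · rintro ⟨e, hs, e', rfl⟩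
      refine ⟨⟨e', ?_⟩, rfl⟩
      apply r.injR.1
      rw [r.incR.tgt, hs]
  omega

lemma degree_interface (k : r.K.V) (hx : g.fV (r.incL.fV k) ∉ r.DelV G g) :
    (r.result G g h).degree (Sum.inl ⟨g.fV (r.incL.fV k), hx⟩) + r.L.degree (r.incL.fV k)
      = G.degree (g.fV (r.incL.fV k)) + r.R.degree (r.incR.fV k) := by
  have hs := src_count_interface r G g h k hx
  have ht := tgt_count_interface r G g h k hx
  unfold GTGraph.degree
  omega


lemma src_count_noninterface (x : G.V) (hx : x ∉ r.DelV G g)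
    (hni : ∀ v : r.L.V, g.fV v ≠ x) :
    Nat.card {e : (r.result G g h).E // (r.result G g h).s e = Sum.inl ⟨x, hx⟩}
      = Nat.card {e : G.E // G.s e = x} := by
  haveI := G.finE; haveI := r.R.finE
  refine (card_sum_split' (α := {x : G.E // x ∉ r.DelE G g})
      (β := {e : r.R.E // ∀ k, r.incR.fE k ≠ e})
      (fun e => (r.result G g h).s e = Sum.inl ⟨x, hx⟩)).trans ?_
  haveI hemp : IsEmpty {b : {e : r.R.E // ∀ k, r.incR.fE k ≠ e} //
      (r.result G g h).s (Sum.inr b) = Sum.inl ⟨x, hx⟩} := by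
    refine ⟨fun b => ?_⟩
    have hb := b.2
    rw [result_s_inr] at hb
    by_cases hk : ∃ k, r.incR.fV k = r.R.s b.1.1
    · rw [dif_pos hk] at hb
      exact hni _ (congrArg Subtype.val (Sum.inl.inj hb))
    · rw [dif_neg hk] at hb
      exact Sum.inr_ne_inl hb
  have hz : Nat.card {b : {e : r.R.E // ∀ k, r.incR.fE k ≠ e} //
      (r.result G g h).s (Sum.inr b) = Sum.inl ⟨x, hx⟩} = 0 := Nat.card_of_isEmpty
  rw [hz, add_zero]
  refine Nat.card_congr (((Equiv.subtypeEquivRight fun a => ?_).trans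
    (Equiv.subtypeSubtypeEquivSubtypeInter (fun e : G.E => e ∉ r.DelE G g)
      (fun e => G.s e = x))).trans (Equiv.subtypeEquivRight fun e => ?_))
  · rw [result_s_inl]
    exact ⟨fun he => congrArg Subtype.val (Sum.inl.inj he),
      fun he => congrArg Sum.inl (Subtype.ext he)⟩
  · constructor
    · rintro ⟨_, hh⟩; exact hh
    · intro hh
      refine ⟨?_, hh⟩
      rintro ⟨e', hne, rfl⟩
      exact hni (r.L.s e') ((g.src e').trans hh)

lemma tgt_count_noninterface (x : G.V) (hx : x ∉ r.DelV G g)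
    (hni : ∀ v : r.L.V, g.fV v ≠ x) :
    Nat.card {e : (r.result G g h).E // (r.result G g h).t e = Sum.inl ⟨x, hx⟩}
      = Nat.card {e : G.E // G.t e = x} := by
  haveI := G.finE; haveI := r.R.finE
  refine (card_sum_split' (α := {x : G.E // x ∉ r.DelE G g})
      (β := {e : r.R.E // ∀ k, r.incR.fE k ≠ e})
      (fun e => (r.result G g h).t e = Sum.inl ⟨x, hx⟩)).trans ?_
  haveI hemp : IsEmpty {b : {e : r.R.E // ∀ k, r.incR.fE k ≠ e} //
      (r.result G g h).t (Sum.inr b) = Sum.inl ⟨x, hx⟩} := by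
    refine ⟨fun b => ?_⟩
    have hb := b.2
    rw [result_t_inr] at hb
    by_cases hk : ∃ k, r.incR.fV k = r.R.t b.1.1
    · rw [dif_pos hk] at hb
      exact hni _ (congrArg Subtype.val (Sum.inl.inj hb))
    · rw [dif_neg hk] at hb
      exact Sum.inr_ne_inl hb
  have hz : Nat.card {b : {e : r.R.E // ∀ k, r.incR.fE k ≠ e} //
      (r.result G g h).t (Sum.inr b) = Sum.inl ⟨x, hx⟩} = 0 := Nat.card_of_isEmpty
  rw [hz, add_zero]
  refine Nat.card_congr (((Equiv.subtypeEquivRight fun a => ?_).trans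
    (Equiv.subtypeSubtypeEquivSubtypeInter (fun e : G.E => e ∉ r.DelE G g)
      (fun e => G.t e = x))).trans (Equiv.subtypeEquivRight fun e => ?_))
  · rw [result_t_inl]
    exact ⟨fun he => congrArg Subtype.val (Sum.inl.inj he),
      fun he => congrArg Sum.inl (Subtype.ext he)⟩
  · constructor
    · rintro ⟨_, hh⟩; exact hh
    · intro hh
      refine ⟨?_, hh⟩
      rintro ⟨e', hne, rfl⟩
      exact hni (r.L.t e') ((g.tgt e').trans hh)

lemma src_count_new (v : r.R.V) (hv : ∀ k, r.incR.fV k ≠ v) :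
    Nat.card {e : (r.result G g h).E // (r.result G g h).s e = Sum.inr ⟨v, hv⟩}
      = Nat.card {e : r.R.E // r.R.s e = v} := by
  haveI := G.finE; haveI := r.R.finE
  refine (card_sum_split' (α := {x : G.E // x ∉ r.DelE G g})
      (β := {e : r.R.E // ∀ k, r.incR.fE k ≠ e})
      (fun e => (r.result G g h).s e = Sum.inr ⟨v, hv⟩)).trans ?_
  haveI hemp : IsEmpty {a : {x : G.E // x ∉ r.DelE G g} //
      (r.result G g h).s (Sum.inl a) = Sum.inr ⟨v, hv⟩} := by
    refine ⟨fun a => ?_⟩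
    have ha := a.2
    rw [result_s_inl] at ha
    exact Sum.inl_ne_inr ha
  have hz : Nat.card {a : {x : G.E // x ∉ r.DelE G g} //
      (r.result G g h).s (Sum.inl a) = Sum.inr ⟨v, hv⟩} = 0 := Nat.card_of_isEmpty
  rw [hz, zero_add]
  refine Nat.card_congr (((Equiv.subtypeEquivRight fun b => ?_).trans
    (Equiv.subtypeSubtypeEquivSubtypeInter (fun e : r.R.E => ∀ k, r.incR.fE k ≠ e)
      (fun e => r.R.s e = v))).trans (Equiv.subtypeEquivRight fun e => ?_))
  · rw [result_s_inr]
    by_cases hk : ∃ k, r.incR.fV k = r.R.s b.1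
    · rw [dif_pos hk]
      simp only [reduceCtorEq, false_iff]
      intro he
      exact hv hk.choose (hk.choose_spec.trans he)
    · rw [dif_neg hk]
      exact ⟨fun he => congrArg Subtype.val (Sum.inr.inj he),
        fun he => congrArg Sum.inr (Subtype.ext he)⟩
  · constructor
    · rintro ⟨_, hh⟩; exact hh
    · intro hh
      refine ⟨fun k hk => ?_, hh⟩
      exact hv (r.K.s k) (by rw [r.incR.src, hk, hh])

lemma tgt_count_new (v : r.R.V) (hv : ∀ k, r.incR.fV k ≠ v) :
    Nat.card {e : (r.result G g h).E // (r.result G g h).t e = Sum.inr ⟨v, hv⟩}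
      = Nat.card {e : r.R.E // r.R.t e = v} := by
  haveI := G.finE; haveI := r.R.finE
  refine (card_sum_split' (α := {x : G.E // x ∉ r.DelE G g})
      (β := {e : r.R.E // ∀ k, r.incR.fE k ≠ e})
      (fun e => (r.result G g h).t e = Sum.inr ⟨v, hv⟩)).trans ?_
  haveI hemp : IsEmpty {a : {x : G.E // x ∉ r.DelE G g} //
      (r.result G g h).t (Sum.inl a) = Sum.inr ⟨v, hv⟩} := by
    refine ⟨fun a => ?_⟩
    have ha := a.2
    rw [result_t_inl] at ha
    exact Sum.inl_ne_inr ha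
  have hz : Nat.card {a : {x : G.E // x ∉ r.DelE G g} //
      (r.result G g h).t (Sum.inl a) = Sum.inr ⟨v, hv⟩} = 0 := Nat.card_of_isEmpty
  rw [hz, zero_add]
  refine Nat.card_congr (((Equiv.subtypeEquivRight fun b => ?_).trans
    (Equiv.subtypeSubtypeEquivSubtypeInter (fun e : r.R.E => ∀ k, r.incR.fE k ≠ e)
      (fun e => r.R.t e = v))).trans (Equiv.subtypeEquivRight fun e => ?_))
  · rw [result_t_inr]
    by_cases hk : ∃ k, r.incR.fV k = r.R.t b.1
    · rw [dif_pos hk]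
      simp only [reduceCtorEq, false_iff]
      intro he
      exact hv hk.choose (hk.choose_spec.trans he)
    · rw [dif_neg hk]
      exact ⟨fun he => congrArg Subtype.val (Sum.inr.inj he),
        fun he => congrArg Sum.inr (Subtype.ext he)⟩
  · constructor
    · rintro ⟨_, hh⟩; exact hh
    · intro hh
      refine ⟨fun k hk => ?_, hh⟩
      exact hv (r.K.t k) (by rw [r.incR.tgt, hk, hh])

lemma degree_noninterface (x : G.V) (hx : x ∉ r.DelV G g)
    (hni : ∀ v : r.L.V, g.fV v ≠ x) :
    (r.result G g h).degree (Sum.inl ⟨x, hx⟩) = G.degree x := by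
  unfold GTGraph.degree
  rw [src_count_noninterface r G g h x hx hni, tgt_count_noninterface r G g h x hx hni]

lemma degree_new (v : r.R.V) (hv : ∀ k, r.incR.fV k ≠ v) :
    (r.result G g h).degree (Sum.inr ⟨v, hv⟩) = r.R.degree v := by
  unfold GTGraph.degree
  rw [src_count_new r G g h v hv, tgt_count_new r G g h v hv]

lemma result_p_inl (x : {x : G.V // x ∉ r.DelV G g}) :
    (r.result G g h).p (Sum.inl x) =
      if hk : ∃ k : r.K.V, r.K.p k = none ∧ g.fV (r.incL.fV k) = x.1 then
        r.R.p (r.incR.fV hk.choose)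
      else G.p x.1 := rfl

lemma result_p_interface (k : r.K.V) (hx : g.fV (r.incL.fV k) ∉ r.DelV G g) :
    (r.result G g h).p (Sum.inl ⟨g.fV (r.incL.fV k), hx⟩) = r.R.p (r.incR.fV k) := by
  rw [result_p_inl]
  by_cases hc : ∃ k' : r.K.V, r.K.p k' = none ∧ g.fV (r.incL.fV k') = g.fV (r.incL.fV k)
  · rw [dif_pos hc]
    have hck : hc.choose = k := r.injL.1 (h.1.1 hc.choose_spec.2)
    rw [hck]
  · rw [dif_neg hc]
    cases hb : r.K.p k with
    | none => exact absurd ⟨k, hb, rfl⟩ hc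
    | some b =>
      rw [r.incR.rootedness k b hb]
      exact g.rootedness _ b (r.incL.rootedness k b hb)

lemma result_p_noninterface (x : G.V) (hx : x ∉ r.DelV G g)
    (hni : ∀ k : r.K.V, g.fV (r.incL.fV k) ≠ x) :
    (r.result G g h).p (Sum.inl ⟨x, hx⟩) = G.p x := by
  rw [result_p_inl]
  exact dif_neg (fun hc => hni _ hc.choose_spec.2)

lemma rootCount_result (hLr : r.L.IsTotallyRooted) :
    (r.result G g h).rootCount + r.L.rootCount = G.rootCount + r.R.rootCount := by
  haveI := G.finV; haveI := r.L.finV; haveI := r.R.finV; haveI := r.K.finV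
  unfold GTGraph.rootCount
  have hsum : Nat.card {w : (r.result G g h).V // (r.result G g h).p w = some true}
      = Nat.card {a : {x : G.V // x ∉ r.DelV G g} //
          (r.result G g h).p (Sum.inl a) = some true}
        + Nat.card {b : {v : r.R.V // ∀ k, r.incR.fV k ≠ v} //
          (r.result G g h).p (Sum.inr b) = some true} :=
    card_sum_split' (α := {x : G.V // x ∉ r.DelV G g})
      (β := {v : r.R.V // ∀ k, r.incR.fV k ≠ v}) _
  have hsplit : Nat.card {a : {x : G.V // x ∉ r.DelV G g} //
        (r.result G g h).p (Sum.inl a) = some true}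
      = Nat.card {a : {x : G.V // x ∉ r.DelV G g} //
          (r.result G g h).p (Sum.inl a) = some true ∧ ∃ k, g.fV (r.incL.fV k) = a.1}
        + Nat.card {a : {x : G.V // x ∉ r.DelV G g} //
          (r.result G g h).p (Sum.inl a) = some true ∧ ¬ ∃ k, g.fV (r.incL.fV k) = a.1} :=
    card_split' _ _
  have hint : Nat.card {a : {x : G.V // x ∉ r.DelV G g} //
        (r.result G g h).p (Sum.inl a) = some true ∧ ∃ k, g.fV (r.incL.fV k) = a.1}
      = Nat.card {k : r.K.V // r.R.p (r.incR.fV k) = some true} := by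
    symm
    refine card_bij' (fun k => ⟨⟨g.fV (r.incL.fV k.1), r.kept_incL G h.1 k.1⟩,
      (result_p_interface r G g h k.1 (r.kept_incL G h.1 k.1)).trans k.2, k.1, rfl⟩) ⟨?_, ?_⟩
    · rintro k1 k2 he
      have hval : g.fV (r.incL.fV k1.1) = g.fV (r.incL.fV k2.1) :=
        congrArg (fun z => z.1.1) he
      exact Subtype.ext (r.injL.1 (h.1.1 hval))
    · rintro ⟨⟨av, hav⟩, hp, k, hk⟩
      refine ⟨⟨k, ?_⟩, Subtype.ext (Subtype.ext hk)⟩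
      have hmk : (⟨g.fV (r.incL.fV k), r.kept_incL G h.1 k⟩ :
          {x : G.V // x ∉ r.DelV G g}) = ⟨av, hav⟩ := Subtype.ext hk
      rw [← result_p_interface r G g h k (r.kept_incL G h.1 k), hmk]
      exact hp
  have hnon : Nat.card {a : {x : G.V // x ∉ r.DelV G g} //
        (r.result G g h).p (Sum.inl a) = some true ∧ ¬ ∃ k, g.fV (r.incL.fV k) = a.1}
      = Nat.card {x : G.V // G.p x = some true ∧ ¬ ∃ v : r.L.V, g.fV v = x} := by
    refine card_bij' (fun a => ⟨a.1.1, ?_, ?_⟩) ⟨?_, ?_⟩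
    · have hni : ∀ k : r.K.V, g.fV (r.incL.fV k) ≠ a.1.1 :=
        fun k he => a.2.2 ⟨k, he⟩
      exact (result_p_noninterface r G g h a.1.1 a.1.2 hni).symm.trans a.2.1
    · rintro ⟨v, hv⟩
      by_cases hvk : ∃ k, r.incL.fV k = v
      · obtain ⟨k, rfl⟩ := hvk
        exact a.2.2 ⟨k, hv⟩
      · exact a.1.2 ⟨v, fun k hk' => hvk ⟨k, hk'⟩, hv⟩
    · rintro a1 a2 he
      simp only [Subtype.mk.injEq] at he
      exact Subtype.ext (Subtype.ext he)
    · rintro ⟨x, hp, hnim⟩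
      have hmem : x ∉ r.DelV G g := by
        rintro ⟨v, hni', hveq⟩
        exact hnim ⟨v, hveq⟩
      have hni : ∀ k : r.K.V, g.fV (r.incL.fV k) ≠ x :=
        fun k he => hnim ⟨r.incL.fV k, he⟩
      exact ⟨⟨⟨x, hmem⟩, (result_p_noninterface r G g h x hmem hni).trans hp,
        fun hc => hnim ⟨r.incL.fV hc.choose, hc.choose_spec⟩⟩, rfl⟩
  have hG' : Nat.card {x : G.V // G.p x = some true}
      = Nat.card {x : G.V // G.p x = some true ∧ ∃ v : r.L.V, g.fV v = x}
        + Nat.card {x : G.V // G.p x = some true ∧ ¬ ∃ v : r.L.V, g.fV v = x} :=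
    card_split' _ _
  have him : Nat.card {x : G.V // G.p x = some true ∧ ∃ v : r.L.V, g.fV v = x}
      = Nat.card {v : r.L.V // r.L.p v = some true} := by
    symm
    refine card_bij' (fun v => ⟨g.fV v.1, g.rootedness _ _ v.2, v.1, rfl⟩) ⟨?_, ?_⟩
    · rintro v1 v2 he
      exact Subtype.ext (h.1.1 (congrArg Subtype.val he))
    · rintro ⟨x, hp, v, rfl⟩
      obtain ⟨b, hb⟩ := Option.isSome_iff_exists.mp (hLr v)
      have hgb := g.rootedness v b hb
      rw [hp] at hgb
      obtain rfl : true = b := Option.some.inj hgb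
      exact ⟨⟨v, hb⟩, rfl⟩
  have hR' : Nat.card {v : r.R.V // r.R.p v = some true}
      = Nat.card {v : r.R.V // r.R.p v = some true ∧ ∃ k, r.incR.fV k = v}
        + Nat.card {v : r.R.V // r.R.p v = some true ∧ ¬ ∃ k, r.incR.fV k = v} :=
    card_split' _ _
  have hRint : Nat.card {v : r.R.V // r.R.p v = some true ∧ ∃ k, r.incR.fV k = v}
      = Nat.card {k : r.K.V // r.R.p (r.incR.fV k) = some true} := by
    symm
    refine card_bij' (fun k => ⟨r.incR.fV k.1, k.2, k.1, rfl⟩) ⟨?_, ?_⟩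
    · rintro k1 k2 he
      exact Subtype.ext (r.injR.1 (congrArg Subtype.val he))
    · rintro ⟨v, hp, k, rfl⟩
      exact ⟨⟨k, hp⟩, rfl⟩
  have hRnew : Nat.card {v : r.R.V // r.R.p v = some true ∧ ¬ ∃ k, r.incR.fV k = v}
      = Nat.card {b : {v : r.R.V // ∀ k, r.incR.fV k ≠ v} //
          (r.result G g h).p (Sum.inr b) = some true} := by
    refine card_bij' (fun v => ⟨⟨v.1, fun k hk => v.2.2 ⟨k, hk⟩⟩, v.2.1⟩) ⟨?_, ?_⟩
    · rintro v1 v2 he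
      exact Subtype.ext (congrArg (fun z => z.1.1) he)
    · rintro ⟨⟨v, hni⟩, hp⟩
      exact ⟨⟨v, hp, fun hc => hni hc.choose hc.choose_spec⟩, rfl⟩
  omega

end Rule

/-- **Bounded degree / bounded roots preservation**: if every rule of `𝓡` is
bounded degree preserving (for the bound `N`) and bounded roots preserving,
then every direct derivation preserves "all degrees ≤ N" and "at most `M`
root nodes". -/
theorem bounded_preserving {LV LE : Type} (N M : ℕ) (Rs : Set (Rule LV LE))
    (hrules : ∀ r ∈ Rs, r.L.IsTLRG ∧ r.R.IsTLRG)
    (hdeg : ∀ r ∈ Rs,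
      (∀ v : r.R.V, (∀ k, r.incR.fV k ≠ v) → r.R.degree v ≤ N) ∧
      (∀ k : r.K.V, r.R.degree (r.incR.fV k) ≤ r.L.degree (r.incL.fV k)))
    (hroot : ∀ r ∈ Rs, r.R.rootCount ≤ r.L.rootCount)
    (G H : GTGraph LV LE) (hG : G.IsTLRG) (hH : H.IsTLRG)
    (hstep : GTStep Rs G H) :
    ((∀ v, G.degree v ≤ N) → ∀ v, H.degree v ≤ N) ∧
    (G.rootCount ≤ M → H.rootCount ≤ M) := by
  obtain ⟨r, hrR, gm, happ, ⟨iso⟩⟩ := hstep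
  obtain ⟨hdegNew, hdegK⟩ := hdeg r hrR
  have hLt := (hrules r hrR).1
  constructor
  · intro hGdeg v
    rw [iso.degree_eq' v]
    generalize iso.invMor.fV v = w
    obtain x | y := w
    · by_cases hk : ∃ k, gm.fV (r.incL.fV k) = x.1
      · obtain ⟨k, hkx⟩ := hk
        have hxeq : x = ⟨gm.fV (r.incL.fV k), r.kept_incL G happ.1 k⟩ :=
          Subtype.ext hkx.symm
        rw [hxeq]
        have key := r.degree_interface G gm happ k (r.kept_incL G happ.1 k)
        have h1 := hdegK k
        have h2 := hGdeg (gm.fV (r.incL.fV k))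
        omega
      · push_neg at hk
        obtain ⟨x, hxm⟩ := x
        have hni : ∀ w : r.L.V, gm.fV w ≠ x := by
          intro w hw'
          by_cases hwk : ∃ k, r.incL.fV k = w
          · obtain ⟨k, rfl⟩ := hwk
            exact hk k hw'
          · exact hxm ⟨w, fun k hk' => hwk ⟨k, hk'⟩, hw'⟩
        rw [r.degree_noninterface G gm happ x hxm hni]
        exact hGdeg x
    · obtain ⟨y, hy⟩ := y
      rw [r.degree_new G gm happ y hy]
      exact hdegNew y hy
  · intro hGrc
    rw [iso.rootCount_eq']
    have key := r.rootCount_result G gm happ hLt.2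
    have h1 := hroot r hrR
    omega
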